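/- Let 1 < k < n. The linear map ψ of (ℚ^{n+1})^* defined by ψ(x_i) = −x_{k−i} for i < k, ψ(x_k) = ∑_{j=1}^{n+1} x_j, ψ(x_i) = −x_{n+1−(i−k)} for k < i ≤ n, and ψ(x_{n+1}) = −x_{n+1}, is a linear automorphism of (ℚ^{n+1})^* that induces a bijection (via H = ker α ↦ ker ψ(α)) of the set of hyperplanes of the connected subgraph arrangement 𝒜_{A_{n,k}} onto itself, and it maps the hyperplane ker(∑_{j=1}^{n+1} x_j) to the hyperplane ker(x_k). -/

import Mathlib

open Finset

/-- The linear form `∑_{i ∈ I} x_i` on `ℚ^n`. -/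
noncomputable def linForm {n : ℕ} (I : Finset (Fin n)) : (Fin n → ℚ) →ₗ[ℚ] ℚ :=
  ∑ i ∈ I, LinearMap.proj i

/-- `I` is a nonempty subset of vertices inducing a connected subgraph of `G`. -/
def ConnSet {n : ℕ} (G : SimpleGraph (Fin n)) (I : Finset (Fin n)) : Prop :=
  I.Nonempty ∧ (G.induce (↑I : Set (Fin n))).Connected

/-- The connected subgraph arrangement of `G`, as a set of hyperplanes of `ℚ^n`. -/
def csa {n : ℕ} (G : SimpleGraph (Fin n)) : Set (Submodule ℚ (Fin n → ℚ)) :=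
  {H | ∃ I : Finset (Fin n), ConnSet G I ∧ H = LinearMap.ker (linForm I)}

/-- The almost path graph `A_{n,k}` (paper notation, vertices `1,…,n+1` realized as
`Fin (n+1)` with `0,…,n`): a path `1–⋯–n` together with the edge `{k, n+1}`. -/
def almostPath (n k : ℕ) : SimpleGraph (Fin (n + 1)) :=
  SimpleGraph.fromRel (fun a b =>
    (a.val + 1 = b.val ∧ b.val < n) ∨ (a.val = k - 1 ∧ b.val = n))

/-- The path-with-triangle graph `Δ_{n,k}` (paper notation): a path `1–⋯–n` together
with the edges `{k, n+1}` and `{k+1, n+1}`. -/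
def pathTriangle (n k : ℕ) : SimpleGraph (Fin (n + 1)) :=
  SimpleGraph.fromRel (fun a b =>
    (a.val + 1 = b.val ∧ b.val < n) ∨ (a.val = k - 1 ∧ b.val = n) ∨ (a.val = k ∧ b.val = n))

/-- The module of `𝒜_G`-derivations `D(𝒜_G) ⊆ Der_ℚ(ℚ[x_1,…,x_n])`. -/
noncomputable def derModule {n : ℕ} (G : SimpleGraph (Fin n)) :
    Submodule (MvPolynomial (Fin n) ℚ)
      (Derivation ℚ (MvPolynomial (Fin n) ℚ) (MvPolynomial (Fin n) ℚ)) where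
  carrier := {θ | ∀ I : Finset (Fin n), ConnSet G I →
    (∑ i ∈ I, MvPolynomial.X i) ∣ θ (∑ i ∈ I, MvPolynomial.X i)}
  add_mem' := by
    intro a b ha hb I hI
    rw [Derivation.add_apply]
    exact dvd_add (ha I hI) (hb I hI)
  zero_mem' := by
    intro I hI
    simp
  smul_mem' := by
    intro c θ hθ I hI
    rw [Derivation.smul_apply, smul_eq_mul]
    exact (hθ I hI).mul_left c

/-- The linear map `T : ℚ^{n+1} → ℚ^{n+1}` whose dual map is the linear map `ψ` of
`(ℚ^{n+1})^*` given (in the paper's 1-based indexing) by `ψ(x_i) = −x_{k−i}` for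
`i < k`, `ψ(x_k) = ∑_{j=1}^{n+1} x_j`, `ψ(x_i) = −x_{n+1−(i−k)}` for `k < i ≤ n`, and
`ψ(x_{n+1}) = −x_{n+1}`. -/
noncomputable def psiT (n k : ℕ) (h1 : 1 < k) (h2 : k < n) :
    (Fin (n + 1) → ℚ) →ₗ[ℚ] (Fin (n + 1) → ℚ) :=
  LinearMap.pi fun a : Fin (n + 1) =>
    if h : a.val + 1 < k then
      -(LinearMap.proj (⟨k - a.val - 2, by omega⟩ : Fin (n + 1)) :
        (Fin (n + 1) → ℚ) →ₗ[ℚ] ℚ)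
    else if h' : a.val + 1 = k then
      ∑ j : Fin (n + 1), (LinearMap.proj j : (Fin (n + 1) → ℚ) →ₗ[ℚ] ℚ)
    else if h'' : a.val < n then
      -(LinearMap.proj (⟨n + k - a.val - 1, by omega⟩ : Fin (n + 1)) :
        (Fin (n + 1) → ℚ) →ₗ[ℚ] ℚ)
    else
      -(LinearMap.proj (Fin.last n) : (Fin (n + 1) → ℚ) →ₗ[ℚ] ℚ)

/-- the coordinate involution -/
def sig (n k : ℕ) (hk : k ≤ n) : Fin (n+1) → Fin (n+1) := fun a =>
  if h : a.val < k - 1 then ⟨k - 2 - a.val, by omega⟩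
  else if h' : a.val = k - 1 then a
  else if h'' : a.val < n then ⟨n + k - 1 - a.val, by omega⟩
  else a

lemma sig_val {n k : ℕ} (hk : k ≤ n) (a : Fin (n+1)) :
    (sig n k hk a).val = if a.val < k - 1 then k - 2 - a.val
      else if a.val = k - 1 then k - 1
      else if a.val < n then n + k - 1 - a.val else n := by
  have := a.isLt
  unfold sig
  split_ifs <;> simp_all <;> omega

lemma sig_invol {n k : ℕ} (h1 : 1 < k) (hk : k ≤ n) (a : Fin (n+1)) :
    sig n k hk (sig n k hk a) = a := by
  have ha := a.isLt
  apply Fin.ext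
  rw [sig_val, sig_val]
  split_ifs <;> omega

lemma sig_inj {n k : ℕ} (h1 : 1 < k) (hk : k ≤ n) : Function.Injective (sig n k hk) :=
  Function.Involutive.injective (sig_invol h1 hk)

lemma sig_eq_c_iff {n k : ℕ} (h1 : 1 < k) (hk : k ≤ n) (a : Fin (n+1)) (hc : k - 1 < n + 1) :
    sig n k hk a = ⟨k-1, hc⟩ ↔ a = ⟨k-1, hc⟩ := by
  constructor
  · intro h
    have := congrArg (sig n k hk) h
    rw [sig_invol h1 hk] at this
    rw [this]
    apply Fin.ext
    rw [sig_val]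
    simp
  · intro h; subst h; apply Fin.ext; rw [sig_val]; simp

lemma psiT_apply {n k : ℕ} (h1 : 1 < k) (h2 : k < n) (x : Fin (n+1) → ℚ) (a : Fin (n+1)) :
    psiT n k h1 h2 x a =
      if a.val = k - 1 then ∑ j, x j else -x (sig n k (le_of_lt h2) a) := by
  have ha := a.isLt
  unfold psiT
  rw [LinearMap.pi_apply]
  by_cases hc : a.val + 1 = k
  · rw [dif_neg (by omega), dif_pos hc, if_pos (by omega)]
    simp
  · rw [if_neg (by omega)]
    by_cases hlt : a.val + 1 < k
    · rw [dif_pos hlt]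
      simp only [LinearMap.neg_apply, LinearMap.proj_apply, neg_inj]
      congr 1
      apply Fin.ext; rw [sig_val]
      simp only
      split_ifs <;> omega
    · rw [dif_neg hlt, dif_neg hc]
      by_cases hn : a.val < n
      · rw [dif_pos hn]
        simp only [LinearMap.neg_apply, LinearMap.proj_apply, neg_inj]
        congr 1
        apply Fin.ext; rw [sig_val]
        simp only
        split_ifs <;> omega
      · rw [dif_neg hn]
        simp only [LinearMap.neg_apply, LinearMap.proj_apply, neg_inj]
        congr 1
        apply Fin.ext; rw [sig_val]
        simp only [Fin.val_last]
        split_ifs <;> omega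

lemma linForm_apply {n : ℕ} (I : Finset (Fin n)) (x : Fin n → ℚ) :
    linForm I x = ∑ i ∈ I, x i := by
  simp [linForm]

def phi (n k : ℕ) (h1 : 1 < k) (h2 : k < n) (I : Finset (Fin (n+1))) : Finset (Fin (n+1)) :=
  if (⟨k-1, lt_of_le_of_lt (Nat.sub_le k 1) (Nat.lt_succ_of_lt h2)⟩ : Fin (n+1)) ∈ I then
    ((I.erase ⟨k-1, lt_of_le_of_lt (Nat.sub_le k 1) (Nat.lt_succ_of_lt h2)⟩).image (sig n k (le_of_lt h2)))ᶜ
  else I.image (sig n k (le_of_lt h2))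

lemma mem_phi {n k : ℕ} (h1 : 1 < k) (h2 : k < n) (I : Finset (Fin (n+1))) (j : Fin (n+1)) :
    j ∈ phi n k h1 h2 I ↔
      if (⟨k-1, lt_of_le_of_lt (Nat.sub_le k 1) (Nat.lt_succ_of_lt h2)⟩ : Fin (n+1)) ∈ I then
        (j = ⟨k-1, lt_of_le_of_lt (Nat.sub_le k 1) (Nat.lt_succ_of_lt h2)⟩ ∨ sig n k (le_of_lt h2) j ∉ I)
      else sig n k (le_of_lt h2) j ∈ I := by
  set c : Fin (n+1) := ⟨k-1, by omega⟩ with hc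
  set s := sig n k (le_of_lt h2) with hs
  have hmem : ∀ (J : Finset (Fin (n+1))), j ∈ J.image s ↔ s j ∈ J := by
    intro J
    simp only [mem_image]
    constructor
    · rintro ⟨i, hi, rfl⟩; rwa [hs, sig_invol h1 (le_of_lt h2)]
    · intro h; exact ⟨s j, h, by rw [hs, sig_invol h1 (le_of_lt h2)]⟩
  unfold phi
  split_ifs with hcI
  · rw [Finset.mem_compl, hmem, Finset.mem_erase]
    constructor
    · intro h
      by_cases hj : j = c
      · left; exact hj
      · right; intro hsj; exact h ⟨fun he => hj
          ((sig_eq_c_iff h1 (le_of_lt h2) j (by omega)).mp he), hsj⟩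
    · rintro (rfl | h)
      · rintro ⟨hne, _⟩
        exact hne ((sig_eq_c_iff h1 (le_of_lt h2) c (by omega)).mpr rfl)
      · rintro ⟨_, hmem'⟩; exact h hmem'
  · exact hmem I

lemma linForm_comp_psiT {n k : ℕ} (h1 : 1 < k) (h2 : k < n) (I : Finset (Fin (n+1))) :
    (linForm I).comp (psiT n k h1 h2) =
      if (⟨k-1, lt_of_le_of_lt (Nat.sub_le k 1) (Nat.lt_succ_of_lt h2)⟩ : Fin (n+1)) ∈ I then linForm (phi n k h1 h2 I)
      else -linForm (phi n k h1 h2 I) := by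
  set c : Fin (n+1) := ⟨k-1, by omega⟩ with hc
  set s := sig n k (le_of_lt h2) with hs
  have hsinj : Function.Injective s := sig_inj h1 (le_of_lt h2)
  have hcval : ∀ i : Fin (n+1), i.val = k - 1 ↔ i = c := by
    intro i; rw [Fin.ext_iff]
  apply LinearMap.ext
  intro x
  rw [LinearMap.comp_apply, linForm_apply]
  have hterm : ∀ i ∈ I, psiT n k h1 h2 x i =
      if i = c then ∑ j, x j else -x (s i) := by
    intro i _
    rw [psiT_apply h1 h2]
    simp only [hcval]
    rfl
  rw [Finset.sum_congr rfl hterm]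
  have himg : ∀ (J : Finset (Fin (n+1))), ∑ i ∈ J, x (s i) = ∑ j ∈ J.image s, x j := by
    intro J
    rw [Finset.sum_image (fun a _ b _ h => hsinj h)]
  split_ifs with hcI
  · rw [← Finset.sum_erase_add _ _ hcI, if_pos rfl]
    have h2' : ∀ i ∈ I.erase c, (if i = c then ∑ j, x j else -x (s i)) = -x (s i) := by
      intro i hi
      rw [if_neg (Finset.ne_of_mem_erase hi)]
    rw [Finset.sum_congr rfl h2']
    unfold phi
    rw [if_pos hcI, linForm_apply]
    have hcompl := Finset.sum_compl_add_sum ((I.erase c).image s) x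
    have : ∑ i ∈ I.erase c, -x (s i) = -∑ i ∈ I.erase c, x (s i) := by
      rw [Finset.sum_neg_distrib]
    rw [this, himg]
    linarith
  · unfold phi
    rw [if_neg hcI, LinearMap.neg_apply, linForm_apply]
    have h2' : ∀ i ∈ I, (if i = c then ∑ j, x j else -x (s i)) = -x (s i) := by
      intro i hi
      have : i ≠ c := fun he => hcI (he ▸ hi)
      rw [if_neg this]
    rw [Finset.sum_congr rfl h2', Finset.sum_neg_distrib, himg]

lemma psiT_invol {n k : ℕ} (h1 : 1 < k) (h2 : k < n) (x : Fin (n+1) → ℚ) :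
    psiT n k h1 h2 (psiT n k h1 h2 x) = x := by
  have hk : k ≤ n := le_of_lt h2
  set c : Fin (n+1) := ⟨k-1, by omega⟩ with hc
  set s := sig n k hk with hs
  have hcval : ∀ i : Fin (n+1), i.val = k - 1 ↔ i = c := by
    intro i; rw [Fin.ext_iff]
  funext a
  rw [psiT_apply]
  by_cases hac : a.val = k-1
  · rw [if_pos hac]
    have hrw : ∀ j ∈ (univ : Finset (Fin (n+1))), psiT n k h1 h2 x j =
        if j = c then ∑ i, x i else -x (s j) := by
      intro j _
      rw [psiT_apply h1 h2]
      simp only [hcval]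
      rfl
    rw [Finset.sum_congr rfl hrw]
    have hcu : c ∈ (univ : Finset (Fin (n+1))) := mem_univ c
    rw [← Finset.sum_erase_add _ _ hcu, if_pos rfl]
    have h2' : ∀ j ∈ (univ : Finset (Fin (n+1))).erase c,
        (if j = c then ∑ i, x i else -x (s j)) = -x (s j) := by
      intro j hj; rw [if_neg (Finset.ne_of_mem_erase hj)]
    rw [Finset.sum_congr rfl h2', Finset.sum_neg_distrib]
    have e2 : ((univ : Finset (Fin (n+1))).erase c).image s = (univ : Finset (Fin (n+1))).erase c := by
      ext j
      simp only [Finset.mem_image, Finset.mem_erase, Finset.mem_univ, and_true]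
      constructor
      · rintro ⟨i, hi, rfl⟩
        intro he
        exact hi ((sig_eq_c_iff h1 hk i (by omega)).mp he)
      · intro hj
        exact ⟨s j, fun he => hj ((sig_eq_c_iff h1 hk j (by omega)).mp he), sig_invol h1 hk j⟩
    have e1 : ∑ j ∈ ((univ : Finset (Fin (n+1))).erase c).image s, x j
        = ∑ j ∈ (univ : Finset (Fin (n+1))).erase c, x (s j) :=
      Finset.sum_image (fun a _ b _ h => sig_inj h1 hk h)
    rw [← e1, e2]
    have hsum := Finset.sum_erase_add (univ : Finset (Fin (n+1))) x hcu
    have hax : a = c := Fin.ext hac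
    rw [hax]
    linarith
  · rw [if_neg hac]
    rw [psiT_apply]
    have hsa : ¬ (s a).val = k - 1 := by
      intro he
      have h3 : s a = c := (hcval (s a)).mp he
      have h4 : a = c := (sig_eq_c_iff h1 hk a (by omega)).mp h3
      exact hac ((hcval a).mpr h4)
    rw [if_neg hsa, sig_invol h1 (le_of_lt h2), neg_neg]

lemma psiT_comp {n k : ℕ} (h1 : 1 < k) (h2 : k < n) :
    (psiT n k h1 h2).comp (psiT n k h1 h2) = LinearMap.id :=
  LinearMap.ext (psiT_invol h1 h2)

lemma dualMap_bij {n k : ℕ} (h1 : 1 < k) (h2 : k < n) :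
    Function.Bijective (psiT n k h1 h2).dualMap := by
  have hinv : Function.Involutive (psiT n k h1 h2).dualMap := by
    intro g
    apply LinearMap.ext
    intro x
    simp only [LinearMap.dualMap_apply, psiT_invol h1 h2]
  exact hinv.bijective

lemma ker_neg' {n : ℕ} (f : (Fin n → ℚ) →ₗ[ℚ] ℚ) : LinearMap.ker (-f) = LinearMap.ker f := by
  ext x
  rw [LinearMap.mem_ker, LinearMap.mem_ker, LinearMap.neg_apply, neg_eq_zero]



lemma adj_iff {n k : ℕ} (h1 : 1 < k) (h2 : k < n) {u v : Fin (n+1)} :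
    (almostPath n k).Adj u v ↔
      ((u.val + 1 = v.val ∧ v.val < n) ∨ (v.val + 1 = u.val ∧ u.val < n) ∨
       (u.val = k-1 ∧ v.val = n) ∨ (v.val = k-1 ∧ u.val = n)) := by
  have hu := u.isLt; have hv := v.isLt
  unfold almostPath
  rw [SimpleGraph.fromRel_adj]
  constructor
  · rintro ⟨hne, h⟩
    rcases h with (⟨h,h'⟩|⟨h,h'⟩)|(⟨h,h'⟩|⟨h,h'⟩) <;> omega
  · intro h
    have hne : u.val ≠ v.val := by omega
    exact ⟨fun he => hne (by rw [he]), by omega⟩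

/-- height function -/
def ht (n k : ℕ) : Fin (n+1) → ℕ := fun w => if w.val = n then k - 1 else w.val

lemma adj_lip {n k : ℕ} (h1 : 1 < k) (h2 : k < n) {u v : Fin (n+1)}
    (h : (almostPath n k).Adj u v) : ht n k u ≤ ht n k v + 1 ∧ ht n k v ≤ ht n k u + 1 := by
  rw [adj_iff h1 h2] at h
  unfold ht
  split_ifs <;> omega

lemma ht_lt {n k : ℕ} (h1 : 1 < k) (h2 : k < n) (w : Fin (n+1)) : ht n k w < n := by
  have := w.isLt
  unfold ht
  split_ifs <;> omega

lemma walk_ivt {V : Type*} {G : SimpleGraph V} (f : V → ℕ)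
    (hf : ∀ {x y : V}, G.Adj x y → f x ≤ f y + 1 ∧ f y ≤ f x + 1) :
    ∀ {u v : V} (W : G.Walk u v) (y : ℕ), f u ≤ y → y ≤ f v →
      ∃ w ∈ W.support, f w = y := by
  intro u v W
  induction W with
  | nil => exact fun y hy1 hy2 => ⟨_, SimpleGraph.Walk.start_mem_support _, by omega⟩
  | @cons u b v adj W ih =>
      intro y hy1 hy2
      by_cases hb : f b ≤ y
      · obtain ⟨w, hw, hwy⟩ := ih y hb hy2
        exact ⟨w, by rw [SimpleGraph.Walk.support_cons]; exact List.mem_cons_of_mem _ hw, hwy⟩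
      · push_neg at hb
        have := hf adj
        exact ⟨u, SimpleGraph.Walk.start_mem_support _, by omega⟩

lemma walk_find {V : Type*} {G : SimpleGraph V} (p : V → Prop) (t : V → Prop)
    (hnb : ∀ {x y : V}, G.Adj x y → t y → ¬ t x → p x) :
    ∀ {u v : V} (W : G.Walk u v), t v → ¬ t u → ∃ w ∈ W.support, p w := by
  intro u v W
  induction W with
  | nil => exact fun htv hntu => absurd htv hntu
  | @cons u b v adj W ih =>
      intro htv hntu
      by_cases hb : t b
      · exact ⟨u, SimpleGraph.Walk.start_mem_support _, hnb adj hb hntu⟩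
      · obtain ⟨w, hw, hpw⟩ := ih htv hb
        exact ⟨w, by rw [SimpleGraph.Walk.support_cons]; exact List.mem_cons_of_mem _ hw, hpw⟩

def Shape (n k : ℕ) (I : Finset (Fin (n+1))) : Prop :=
  (∃ a b : ℕ, a ≤ b ∧ b < n ∧ ∀ i : Fin (n+1), i ∈ I ↔ (a ≤ i.val ∧ i.val ≤ b)) ∨
  (∃ a b : ℕ, a ≤ k - 1 ∧ k - 1 ≤ b ∧ b < n ∧
    ∀ i : Fin (n+1), i ∈ I ↔ ((a ≤ i.val ∧ i.val ≤ b) ∨ i.val = n)) ∨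
  (∀ i : Fin (n+1), i ∈ I ↔ i.val = n)

lemma reach_chain {n k : ℕ} (h1 : 1 < k) (h2 : k < n) (I : Finset (Fin (n+1))) {a b : ℕ}
    (hb : b < n) (hab : a ≤ b)
    (hI : ∀ m : ℕ, a ≤ m → m ≤ b → ∀ h : m < n + 1, (⟨m, h⟩ : Fin (n+1)) ∈ I) :
    ∀ (u v : ↑(↑I : Set (Fin (n+1)))), a ≤ (↑u : Fin (n+1)).val → (↑u : Fin (n+1)).val ≤ b →
      a ≤ (↑v : Fin (n+1)).val → (↑v : Fin (n+1)).val ≤ b →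
      ((almostPath n k).induce (↑I : Set (Fin (n+1)))).Reachable u v := by
  have hmem : ∀ (m : ℕ) (h : m < n + 1), (⟨m, h⟩ : Fin (n+1)) ∈ I →
      (⟨m, h⟩ : Fin (n+1)) ∈ (↑I : Set (Fin (n+1))) := fun m h hm => Finset.mem_coe.mpr hm
  have hbase : ((⟨a, by omega⟩ : Fin (n+1)) : Fin (n+1)) ∈ (↑I : Set (Fin (n+1))) :=
    hmem a (by omega) (hI a le_rfl hab _)
  have key : ∀ (d : ℕ) (v : ↑(↑I : Set (Fin (n+1)))),
      (↑v : Fin (n+1)).val ≤ b → (↑v : Fin (n+1)).val = a + d →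
      ((almostPath n k).induce (↑I : Set (Fin (n+1)))).Reachable
        ⟨⟨a, by omega⟩, hbase⟩ v := by
    intro d
    induction d with
    | zero =>
        intro v hv2 hv3
        have : v = ⟨⟨a, by omega⟩, hbase⟩ := by
          apply Subtype.ext
          apply Fin.ext
          simpa using hv3
        rw [this]
    | succ d ih =>
        intro v hv2 hv3
        have hprev_lt : a + d < n + 1 := by omega
        have hprev_mem : (⟨a + d, hprev_lt⟩ : Fin (n+1)) ∈ I :=
          hI (a + d) (by omega) (by omega) _
        have hreach := ih ⟨⟨a + d, hprev_lt⟩, hmem _ _ hprev_mem⟩ (by simp; omega) (by simp)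
        have hadj : ((almostPath n k).induce (↑I : Set (Fin (n+1)))).Adj
            ⟨⟨a + d, hprev_lt⟩, hmem _ _ hprev_mem⟩ v := by
          simp only [SimpleGraph.comap_adj, Function.Embedding.coe_subtype]
          rw [adj_iff h1 h2]
          left
          simp only
          omega
        exact hreach.trans hadj.reachable
  intro u v hu1 hu2 hv1 hv2
  have hu := key ((↑u : Fin (n+1)).val - a) u hu2 (by omega)
  have hv := key ((↑v : Fin (n+1)).val - a) v hv2 (by omega)
  exact hu.symm.trans hv

lemma shape_conn {n k : ℕ} (h1 : 1 < k) (h2 : k < n) (I : Finset (Fin (n+1)))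
    (hne : I.Nonempty) (hs : Shape n k I) : ConnSet (almostPath n k) I := by
  refine ⟨hne, ?_⟩
  rw [SimpleGraph.connected_iff]
  obtain ⟨w, hw⟩ := hne
  refine ⟨?_, ⟨⟨w, Finset.mem_coe.mpr hw⟩⟩⟩
  rcases hs with ⟨a, b, hab, hb, hmem⟩ | ⟨a, b, hak, hkb, hb, hmem⟩ | hmem
  · intro u v
    have hu := (hmem _).mp (Finset.mem_coe.mp u.2)
    have hv := (hmem _).mp (Finset.mem_coe.mp v.2)
    exact reach_chain h1 h2 I hb hab
      (fun m hm1 hm2 h => (hmem ⟨m, h⟩).mpr ⟨hm1, hm2⟩) u v hu.1 hu.2 hv.1 hv.2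
  · -- shape 2
    have hcmem : (⟨k-1, by omega⟩ : Fin (n+1)) ∈ I := (hmem _).mpr (Or.inl ⟨hak, hkb⟩)
    set cvert : ↑(↑I : Set (Fin (n+1))) := ⟨⟨k-1, by omega⟩, Finset.mem_coe.mpr hcmem⟩
      with hcv
    have hax : ∀ u : ↑(↑I : Set (Fin (n+1))),
        ((almostPath n k).induce (↑I : Set (Fin (n+1)))).Reachable u cvert := by
      intro u
      have hu := (hmem _).mp (Finset.mem_coe.mp u.2)
      rcases hu with ⟨hu1, hu2⟩ | hun
      · exact reach_chain h1 h2 I hb (le_trans hu1 hu2)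
          (fun m hm1 hm2 h => (hmem ⟨m, h⟩).mpr (Or.inl ⟨hm1, hm2⟩)) u cvert hu1 hu2
          (by simp [hcv]; omega) (by simp [hcv]; omega)
      · have hadj : ((almostPath n k).induce (↑I : Set (Fin (n+1)))).Adj u cvert := by
          simp only [SimpleGraph.comap_adj, Function.Embedding.coe_subtype]
          rw [adj_iff h1 h2]
          right; right; right
          constructor
          · simp [hcv]
          · exact hun
        exact hadj.reachable
    exact fun u v => (hax u).trans (hax v).symm
  · -- shape 3
    intro u v
    have hu := (hmem _).mp (Finset.mem_coe.mp u.2)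
    have hv := (hmem _).mp (Finset.mem_coe.mp v.2)
    have : u = v := by
      apply Subtype.ext; apply Fin.ext; omega
    rw [this]

lemma conn_shape {n k : ℕ} (h1 : 1 < k) (h2 : k < n) (I : Finset (Fin (n+1)))
    (hc : ConnSet (almostPath n k) I) : Shape n k I := by
  obtain ⟨hne, hconn⟩ := hc
  set T := I.image (ht n k) with hT
  have hTne : T.Nonempty := hne.image _
  set a := T.min' hTne with ha
  set b := T.max' hTne with hbdef
  have haT : a ∈ T := T.min'_mem hTne
  have hbT : b ∈ T := T.max'_mem hTne
  have hab : a ≤ b := T.min'_le b hbT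
  have hbn : b < n := by
    obtain ⟨w, hw, hwb⟩ := Finset.mem_image.mp hbT
    rw [← hwb]
    exact ht_lt h1 h2 w
  have hbound : ∀ i ∈ I, a ≤ ht n k i ∧ ht n k i ≤ b := fun i hi =>
    ⟨T.min'_le _ (Finset.mem_image_of_mem _ hi), T.le_max' _ (Finset.mem_image_of_mem _ hi)⟩
  have hlip : ∀ {x y : ↑(↑I : Set (Fin (n+1)))},
      ((almostPath n k).induce (↑I : Set (Fin (n+1)))).Adj x y →
      ht n k ↑x ≤ ht n k ↑y + 1 ∧ ht n k ↑y ≤ ht n k ↑x + 1 := by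
    intro x y hxy
    have : (almostPath n k).Adj ↑x ↑y := by
      simpa only [SimpleGraph.comap_adj, Function.Embedding.coe_subtype] using hxy
    exact adj_lip h1 h2 this
  have claim : ∀ y, a ≤ y → y ≤ b → ∃ w ∈ I, ht n k w = y := by
    obtain ⟨u, hu, hua⟩ := Finset.mem_image.mp haT
    obtain ⟨v, hv, hvb⟩ := Finset.mem_image.mp hbT
    intro y hy1 hy2
    obtain ⟨W⟩ := hconn.preconnected ⟨u, Finset.mem_coe.mpr hu⟩ ⟨v, Finset.mem_coe.mpr hv⟩
    obtain ⟨w, hwsup, hwy⟩ := walk_ivt (fun w : ↑(↑I : Set (Fin (n+1))) => ht n k ↑w) hlip W y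
      (show ht n k u ≤ y by rw [hua]; exact hy1)
      (show y ≤ ht n k v by rw [hvb]; exact hy2)
    exact ⟨↑w, Finset.mem_coe.mp w.2, hwy⟩
  have claimval : ∀ y (hy : y < n+1), a ≤ y → y ≤ b → y ≠ k-1 →
      (⟨y, hy⟩ : Fin (n+1)) ∈ I := by
    intro y hy hy1 hy2 hyk
    obtain ⟨w, hw, hwy⟩ := claim y hy1 hy2
    have hwv : w.val = y := by
      unfold ht at hwy
      split_ifs at hwy <;> omega
    have : w = ⟨y, hy⟩ := Fin.ext hwv
    exact this ▸ hw
  by_cases hν : (⟨n, by omega⟩ : Fin (n+1)) ∈ I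
  · by_cases hall : ∀ m ∈ I, (m : Fin (n+1)).val = n
    · right; right
      intro i
      exact ⟨fun hi => hall i hi, fun hi => (Fin.ext hi : i = ⟨n, by omega⟩) ▸ hν⟩
    · push_neg at hall
      obtain ⟨m, hm, hmn⟩ := hall
      have hcI : (⟨k-1, by omega⟩ : Fin (n+1)) ∈ I := by
        obtain ⟨W⟩ := hconn.preconnected ⟨m, Finset.mem_coe.mpr hm⟩
          ⟨⟨n, by omega⟩, Finset.mem_coe.mpr hν⟩
        obtain ⟨w, hws, hwp⟩ := walk_find
          (fun w : ↑(↑I : Set (Fin (n+1))) => (↑w : Fin (n+1)).val = k-1)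
          (fun w : ↑(↑I : Set (Fin (n+1))) => (↑w : Fin (n+1)).val = n)
          (by
            intro x y hxy hty hntx
            have : (almostPath n k).Adj ↑x ↑y := by
              simpa only [SimpleGraph.comap_adj, Function.Embedding.coe_subtype] using hxy
            rw [adj_iff h1 h2] at this
            omega)
          W (by simp) hmn
        have : (↑w : Fin (n+1)) = ⟨k-1, by omega⟩ := Fin.ext hwp
        exact this ▸ (Finset.mem_coe.mp w.2)
      right; left
      have hνb := hbound _ hν
      have hνht : ht n k (⟨n, by omega⟩ : Fin (n+1)) = k - 1 := by unfold ht; simp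
      rw [hνht] at hνb
      refine ⟨a, b, hνb.1, hνb.2, hbn, ?_⟩
      intro i
      constructor
      · intro hi
        by_cases hin : i.val = n
        · right; exact hin
        · left
          have hb := hbound i hi
          unfold ht at hb
          rw [if_neg hin] at hb
          exact hb
      · rintro (⟨hi1, hi2⟩ | hin)
        · by_cases hik : i.val = k-1
          · exact (Fin.ext hik : i = ⟨k-1, by omega⟩) ▸ hcI
          · have := claimval i.val i.isLt hi1 hi2 hik
            simpa using this
        · exact (Fin.ext hin : i = ⟨n, by omega⟩) ▸ hν
  · left
    refine ⟨a, b, hab, hbn, ?_⟩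
    intro i
    constructor
    · intro hi
      have hb := hbound i hi
      have hin : i.val ≠ n := fun he => hν ((Fin.ext he : i = ⟨n, by omega⟩) ▸ hi)
      unfold ht at hb
      rw [if_neg hin] at hb
      exact hb
    · rintro ⟨hi1, hi2⟩
      by_cases hik : i.val = k-1
      · obtain ⟨w, hw, hwy⟩ := claim (k-1) (by omega) (by omega)
        unfold ht at hwy
        split_ifs at hwy with hwn
        · exact absurd ((Fin.ext hwn : w = ⟨n, by omega⟩) ▸ hw) hν
        · exact (Fin.ext (by omega : w.val = i.val) : w = i) ▸ hw
      · have := claimval i.val i.isLt hi1 hi2 hik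
        simpa using this

lemma phi_nonempty {n k : ℕ} (h1 : 1 < k) (h2 : k < n) (I : Finset (Fin (n+1)))
    (hne : I.Nonempty) : (phi n k h1 h2 I).Nonempty := by
  unfold phi
  split_ifs with hcI
  · refine ⟨⟨k-1, by omega⟩, ?_⟩
    rw [Finset.mem_compl]
    intro hmem
    obtain ⟨i, hi, hsi⟩ := Finset.mem_image.mp hmem
    have : i = ⟨k-1, by omega⟩ := (sig_eq_c_iff h1 (le_of_lt h2) i (by omega)).mp hsi
    exact (Finset.mem_erase.mp hi).1 this
  · exact hne.image _

lemma phi_shape {n k : ℕ} (h1 : 1 < k) (h2 : k < n) (I : Finset (Fin (n+1)))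
    (hs : Shape n k I) : Shape n k (phi n k h1 h2 I) := by
  have hk : k ≤ n := le_of_lt h2
  have hmemphi := mem_phi h1 h2 I
  have hsv : ∀ j : Fin (n+1), (sig n k hk j).val = if j.val < k - 1 then k - 2 - j.val
      else if j.val = k - 1 then k - 1
      else if j.val < n then n + k - 1 - j.val else n := sig_val hk
  by_cases hcI : (⟨k-1, by omega⟩ : Fin (n+1)) ∈ I
  · -- c ∈ I : phi I = complement-type set
    have hmem' : ∀ j : Fin (n+1), j ∈ phi n k h1 h2 I ↔
        (j.val = k - 1 ∨ sig n k hk j ∉ I) := by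
      intro j
      rw [hmemphi j, if_pos hcI]
      constructor
      · rintro (rfl | h)
        · left; rfl
        · right; exact h
      · rintro (hj | h)
        · left; exact Fin.ext hj
        · right; exact h
    rcases hs with ⟨a, b, hab, hbn, hmem⟩ | ⟨a, b, hak, hkb, hbn, hmem⟩ | hmem
    · -- shape 1; c ∈ I forces a ≤ k-1 ≤ b; result: shape 2
      have hc' := (hmem _).mp hcI
      simp only at hc'
      right; left
      refine ⟨k-1-a, n+k-2-b, by omega, by omega, by omega, ?_⟩
      intro j
      have hj := j.isLt
      rw [hmem' j]
      constructor
      · rintro (hj1 | hj2)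
        · left; omega
        · rw [hmem (sig n k hk j)] at hj2
          rw [hsv j] at hj2
          split_ifs at hj2 <;> omega
      · intro hcase
        by_cases hjk : j.val = k - 1
        · left; exact hjk
        · right
          rw [hmem (sig n k hk j), hsv j]
          split_ifs <;> omega
    · -- shape 2 (n ∈ I); result: shape 1
      have hc' : (⟨n, by omega⟩ : Fin (n+1)) ∈ I := (hmem _).mpr (by right; rfl)
      left
      refine ⟨k-1-a, n+k-2-b, by omega, by omega, ?_⟩
      intro j
      have hj := j.isLt
      rw [hmem' j]
      constructor
      · rintro (hj1 | hj2)
        · omega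
        · rw [hmem (sig n k hk j), hsv j] at hj2
          push_neg at hj2
          split_ifs at hj2 <;> omega
      · intro hcase
        by_cases hjk : j.val = k - 1
        · left; exact hjk
        · right
          rw [hmem (sig n k hk j), hsv j]
          push_neg
          split_ifs <;> omega
    · -- shape 3 : c.val = n impossible
      have := (hmem _).mp hcI
      simp only at this
      omega
  · -- c ∉ I : phi I = image
    have hmem' : ∀ j : Fin (n+1), j ∈ phi n k h1 h2 I ↔ sig n k hk j ∈ I := by
      intro j
      rw [hmemphi j, if_neg hcI]
    rcases hs with ⟨a, b, hab, hbn, hmem⟩ | ⟨a, b, hak, hkb, hbn, hmem⟩ | hmem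
    · -- shape 1 avoiding k-1
      have hnotc : ¬ (a ≤ k-1 ∧ k-1 ≤ b) := fun h =>
        hcI ((hmem ⟨k-1, by omega⟩).mpr (by simpa using h))
      left
      rcases (by omega : b < k - 1 ∨ k - 1 < a) with hsplit | hsplit
      · refine ⟨k-2-b, k-2-a, by omega, by omega, ?_⟩
        intro j
        have hj := j.isLt
        rw [hmem' j, hmem (sig n k hk j), hsv j]
        split_ifs <;> omega
      · refine ⟨n+k-1-b, n+k-1-a, by omega, by omega, ?_⟩
        intro j
        have hj := j.isLt
        rw [hmem' j, hmem (sig n k hk j), hsv j]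
        split_ifs <;> omega
    · -- shape 2 contains c : contradiction
      exact absurd ((hmem ⟨k-1, by omega⟩).mpr (Or.inl ⟨hak, hkb⟩)) hcI
    · -- shape 3
      right; right
      intro j
      have hj := j.isLt
      rw [hmem' j, hmem (sig n k hk j), hsv j]
      split_ifs <;> omega


lemma conn_phi {n k : ℕ} (h1 : 1 < k) (h2 : k < n) (I : Finset (Fin (n+1)))
    (hc : ConnSet (almostPath n k) I) : ConnSet (almostPath n k) (phi n k h1 h2 I) :=
  shape_conn h1 h2 _ (phi_nonempty h1 h2 I hc.1) (phi_shape h1 h2 I (conn_shape h1 h2 I hc))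

lemma comap_ker_eq {n k : ℕ} (h1 : 1 < k) (h2 : k < n) (I : Finset (Fin (n+1))) :
    Submodule.comap (psiT n k h1 h2) (LinearMap.ker (linForm I)) =
      LinearMap.ker (linForm (phi n k h1 h2 I)) := by
  rw [← LinearMap.ker_comp, linForm_comp_psiT h1 h2]
  split_ifs
  · rfl
  · exact ker_neg' _

lemma comap_invol {n k : ℕ} (h1 : 1 < k) (h2 : k < n)
    (H : Submodule ℚ (Fin (n+1) → ℚ)) :
    Submodule.comap (psiT n k h1 h2) (Submodule.comap (psiT n k h1 h2) H) = H := by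
  rw [← Submodule.comap_comp]
  show Submodule.comap ((psiT n k h1 h2).comp (psiT n k h1 h2)) H = H
  rw [psiT_comp h1 h2, Submodule.comap_id]

lemma csa_mapsTo {n k : ℕ} (h1 : 1 < k) (h2 : k < n) :
    Set.MapsTo (fun H => Submodule.comap (psiT n k h1 h2) H)
      (csa (almostPath n k)) (csa (almostPath n k)) := by
  rintro H ⟨I, hI, rfl⟩
  exact ⟨phi n k h1 h2 I, conn_phi h1 h2 I hI, comap_ker_eq h1 h2 I⟩


/-- For `1 < k < n`, the map `ψ = (psiT n k _ _).dualMap` is a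
linear automorphism of `(ℚ^{n+1})^*` which induces a bijection (via
`H = ker α ↦ ker (ψ α)`, i.e. `H ↦ Submodule.comap (psiT n k _ _) H`) of the set of
hyperplanes of the connected subgraph arrangement `𝒜_{A_{n,k}}` onto itself, mapping
the hyperplane `ker (∑_{j=1}^{n+1} x_j)` to the hyperplane `ker x_k`. -/
theorem csa_almostPath_automorphism (n k : ℕ) (h1 : 1 < k) (h2 : k < n) :
    Function.Bijective (psiT n k h1 h2).dualMap ∧
      Set.BijOn (fun H => Submodule.comap (psiT n k h1 h2) H)
        (csa (almostPath n k)) (csa (almostPath n k)) ∧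
      Submodule.comap (psiT n k h1 h2)
          (LinearMap.ker (linForm (Finset.univ : Finset (Fin (n + 1))))) =
        LinearMap.ker (LinearMap.proj (⟨k - 1, by omega⟩ : Fin (n + 1)) :
          (Fin (n + 1) → ℚ) →ₗ[ℚ] ℚ) := by
  refine ⟨dualMap_bij h1 h2, ?_, ?_⟩
  · refine ⟨csa_mapsTo h1 h2, ?_, ?_⟩
    · intro H _ H' _ he
      have := congrArg (fun K => Submodule.comap (psiT n k h1 h2) K) he
      simpa only [comap_invol h1 h2] using this
    · intro H hH
      exact ⟨Submodule.comap (psiT n k h1 h2) H, csa_mapsTo h1 h2 hH, comap_invol h1 h2 H⟩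
  · rw [comap_ker_eq h1 h2]
    have hphi : phi n k h1 h2 (Finset.univ : Finset (Fin (n+1))) =
        {(⟨k-1, by omega⟩ : Fin (n+1))} := by
      ext j
      rw [mem_phi h1 h2, if_pos (Finset.mem_univ _), Finset.mem_singleton]
      simp
    rw [hphi]
    congr 1
    unfold linForm
    rw [Finset.sum_singleton]
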